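/- Let C, D be finitary extensive categories with finite products, L ⊣ R : D → C with L and R both preserving finite coproducts and finite products. Then for every decidable object X of C, the unit σ_X : X → R(L X) is a monomorphism. -/

import Mathlib

open CategoryTheory CategoryTheory.Limits

/-- A morphism `i : X ⟶ Z` is a (binary coproduct) summand if there is a morphism
`j : Y ⟶ Z` such that the cospan `X ⟶ Z ⟵ Y` is a coproduct cocone. -/
def IsSummand {C : Type*} [Category C] {X Z : C} (i : X ⟶ Z) : Prop :=
  ∃ (Y : C) (j : Y ⟶ Z), Nonempty (IsColimit (BinaryCofan.mk i j))

/-- An object `X` is decidable if its diagonal `X ⟶ X ⨯ X` is a coproduct summand. -/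
noncomputable def IsDecidableObj {C : Type*} [Category C] [HasBinaryProducts C] (X : C) : Prop :=
  IsSummand (diag X)
/-- For an adjunction `L ⊣ R` between finitary extensive categories with finite products
in which both functors preserve finite coproducts and finite products, the unit is a
monomorphism at every decidable object. -/
theorem unit_mono_of_decidable
    {C D : Type*} [Category C] [Category D] [FinitaryExtensive C] [FinitaryExtensive D]
    [HasFiniteProducts C] [HasFiniteProducts D]
    (L : C ⥤ D) (R : D ⥤ C) (adj : L ⊣ R)
    [PreservesFiniteCoproducts L] [PreservesFiniteCoproducts R]
    [PreservesFiniteProducts L] [PreservesFiniteProducts R] :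
    ∀ X : C, IsDecidableObj X → Mono (adj.unit.app X) := by
  intro X hX
  obtain ⟨Y, j, ⟨hc⟩⟩ := hX
  let G := L ⋙ R
  let σ := adj.unit
  -- the image cofan is a colimit
  have hmap : IsColimit (G.mapCocone (BinaryCofan.mk (diag X) j)) :=
    isColimitOfPreserves G hc
  -- it is van Kampen
  have hVK := FinitaryExtensive.vanKampen _ hmap
  -- the naturality transformation
  let α : pair X Y ⟶ pair X Y ⋙ G :=
    { app := fun k => σ.app ((pair X Y).obj k)
      naturality := fun _ _ f => σ.naturality ((pair X Y).map f) }
  have hcomm : α ≫ (G.mapCocone (BinaryCofan.mk (diag X) j)).ι =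
      (BinaryCofan.mk (diag X) j).ι ≫
        (Functor.const (Discrete WalkingPair)).map (σ.app (X ⨯ X)) := by
    ext ⟨⟨⟩⟩ <;> exact (σ.naturality _).symm
  have hpb := (hVK (BinaryCofan.mk (diag X) j) α (σ.app (X ⨯ X)) hcomm
      (NatTrans.equifibered_of_discrete α)).mp ⟨hc⟩ ⟨WalkingPair.left⟩
  -- `hpb : IsPullback (diag X) (σ.app X) (σ.app (X ⨯ X)) (G.map (diag X))`
  constructor
  intro T a b hab
  have key : prod.lift a b ≫ σ.app (X ⨯ X) = (a ≫ σ.app X) ≫ G.map (diag X) := by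
    have : IsIso (prodComparison G X X) := inferInstance
    rw [← cancel_mono (prodComparison G X X)]
    apply Limits.prod.hom_ext
    · simp only [Category.assoc, prodComparison_fst, ← G.map_comp]
      rw [← σ.naturality]
      simp [σ, G]
      erw [prod.lift_fst_assoc, prod.lift_fst_assoc, Category.id_comp]
    · simp only [Category.assoc, prodComparison_snd, ← G.map_comp]
      rw [← σ.naturality]
      simp [σ, G, hab]
      erw [prod.lift_snd_assoc, prod.lift_snd_assoc, Category.id_comp, hab]
  have ht1 : hpb.lift (prod.lift a b) (a ≫ σ.app X) key ≫ diag X = prod.lift a b :=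
    hpb.lift_fst _ _ _
  set t := hpb.lift (prod.lift a b) (a ≫ σ.app X) key
  have ha : t = a := by
    have := ht1 =≫ prod.fst
    erw [Category.assoc, prod.lift_fst, prod.lift_fst, Category.comp_id] at this
    exact this
  have hb : t = b := by
    have := ht1 =≫ prod.snd
    erw [Category.assoc, prod.lift_snd, prod.lift_snd, Category.comp_id] at this
    exact this
  rw [← ha, ← hb]
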